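/- In the well-pointed endofunctor setting below, for every object X of C both of the morphisms ι.app (T X) : T X ⟶ T (T X) and T.map (ι.app X) : T X ⟶ T (T X) are isomorphisms. (This is the main conclusion of the paper's localization lemma: by Lurie's criterion, the pair (T, ι) therefore exhibits a reflective localization of C.) -/

import Mathlib

open CategoryTheory CategoryTheory.Limits

universe v u

variable {C : Type u} [Category.{v} C]

def funIter (U : C ⥤ C) : ℕ → C ⥤ C
  | 0 => 𝟭 C
  | n + 1 => funIter U n ⋙ U

lemma funIter_obj_comm (U : C ⥤ C) (n : ℕ) (X : C) :
    (funIter U n).obj (U.obj X) = U.obj ((funIter U n).obj X) := by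
  induction n with
  | zero => rfl
  | succ n ih =>
      show U.obj ((funIter U n).obj (U.obj X)) = U.obj (U.obj ((funIter U n).obj X))
      rw [ih]

/-- The chain `X ⟶ U X ⟶ U² X ⟶ ⋯` with transition maps `α.app (Uⁿ X)`. -/
def chain (U : C ⥤ C) (α : 𝟭 C ⟶ U) (A : C) : ℕ ⥤ C :=
  Functor.ofSequence (X := fun n => (funIter U n).obj A)
    (fun n => α.app ((funIter U n).obj A))

/-- The functorial action of the chain construction. -/
def chainMap (U : C ⥤ C) (α : 𝟭 C ⟶ U) {A B : C} (f : A ⟶ B) :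
    chain U α A ⟶ chain U α B :=
  NatTrans.ofSequence (F := chain U α A) (G := chain U α B)
    (fun n => (funIter U n).map f)
    (fun n => by
      simp only [chain]
      first
        | (erw [Functor.ofSequence_map_homOfLE_succ, Functor.ofSequence_map_homOfLE_succ]
           exact (α.naturality ((funIter U n).map f)).symm)
        | exact (α.naturality ((funIter U n).map f)).symm)

variable [HasColimitsOfShape ℕ C]

/-- `T X`, the colimit of the chain `X ⟶ U X ⟶ U² X ⟶ ⋯`. -/
noncomputable def Tobj (U : C ⥤ C) (α : 𝟭 C ⟶ U) (A : C) : C :=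
  colimit (chain U α A)

/-- The action of `T` on morphisms. -/
noncomputable def Tmap (U : C ⥤ C) (α : 𝟭 C ⟶ U) {A B : C} (f : A ⟶ B) :
    Tobj U α A ⟶ Tobj U α B :=
  colimMap (chainMap U α f)

/-- The component `ι.app A : A ⟶ T A`, the colimit cocone leg at stage `0`. -/
noncomputable def tUnit (U : C ⥤ C) (α : 𝟭 C ⟶ U) (A : C) : A ⟶ Tobj U α A :=
  colimit.ι (chain U α A) 0


/-- The iterated pointing `X ⟶ Uⁿ X`. -/
def αPow (U : C ⥤ C) (α : 𝟭 C ⟶ U) : (n : ℕ) → (𝟭 C ⟶ funIter U n)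
  | 0 => 𝟙 _
  | n + 1 =>
      { app := fun X => (αPow U α n).app X ≫ α.app ((funIter U n).obj X)
        naturality := by
          intro X Y f
          have h1 := (αPow U α n).naturality f
          have h2 := α.naturality ((funIter U n).map f)
          simp only [Functor.id_map] at h1 h2 ⊢
          show f ≫ _ = _ ≫ U.map ((funIter U n).map f)
          erw [← Category.assoc, h1, Category.assoc, h2, Category.assoc] }

lemma funIter_swap (U : C ⥤ C) (m n : ℕ) (X : C) :
    (funIter U m).obj ((funIter U n).obj X) = (funIter U n).obj ((funIter U m).obj X) := by
  induction n with
  | zero => rfl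
  | succ n ih =>
      show (funIter U m).obj (U.obj ((funIter U n).obj X)) = U.obj ((funIter U n).obj ((funIter U m).obj X))
      rw [funIter_obj_comm, ih]

lemma hwp_pow (U : C ⥤ C) (α : 𝟭 C ⟶ U)
    (hwp : ∀ X : C, U.map (α.app X) = α.app (U.obj X)) (n : ℕ) (Z : C) :
    (funIter U n).map (α.app Z) ≫ eqToHom (funIter_obj_comm U n Z) = α.app ((funIter U n).obj Z) := by
  induction n with
  | zero => simp [funIter]
  | succ n ih =>
      show U.map ((funIter U n).map (α.app Z)) ≫ _ = α.app (U.obj ((funIter U n).obj Z))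
      rw [show (eqToHom (funIter_obj_comm U (n+1) Z) :
            (funIter U (n+1)).obj (U.obj Z) ⟶ U.obj ((funIter U (n+1)).obj Z)) =
            U.map (eqToHom (funIter_obj_comm U n Z)) from (eqToHom_map U _).symm,
        ← U.map_comp, ih, hwp]

lemma pow_comm' (U : C ⥤ C) (α : 𝟭 C ⟶ U)
    (hwp : ∀ X : C, U.map (α.app X) = α.app (U.obj X)) (m n : ℕ) (X : C) :
    (funIter U m).map ((αPow U α n).app X) ≫ eqToHom (funIter_swap U m n X) =
      (αPow U α n).app ((funIter U m).obj X) := by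
  induction n with
  | zero =>
      show (funIter U m).map (𝟙 X) ≫ _ = 𝟙 _
      erw [(funIter U m).map_id, Category.id_comp]
      rfl
  | succ n ih =>
      show (funIter U m).map ((αPow U α n).app X ≫ α.app ((funIter U n).obj X)) ≫ _ =
        (αPow U α n).app ((funIter U m).obj X) ≫ α.app ((funIter U n).obj ((funIter U m).obj X))
      rw [(funIter U m).map_comp]
      have hsplit : (eqToHom (funIter_swap U m (n+1) X) :
          (funIter U m).obj ((funIter U (n+1)).obj X) ⟶ (funIter U (n+1)).obj ((funIter U m).obj X)) =
          eqToHom (funIter_obj_comm U m ((funIter U n).obj X)) ≫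
            eqToHom (congrArg U.obj (funIter_swap U m n X)) := by
        rw [eqToHom_trans]
        rfl
      erw [Category.assoc, hsplit, ← Category.assoc ((funIter U m).map (α.app ((funIter U n).obj X))),
        hwp_pow U α hwp m ((funIter U n).obj X)]
      have hnat : α.app ((funIter U m).obj ((funIter U n).obj X)) ≫
          eqToHom (congrArg U.obj (funIter_swap U m n X)) =
          eqToHom (funIter_swap U m n X) ≫ α.app ((funIter U n).obj ((funIter U m).obj X)) := by
        rw [← eqToHom_map U]
        exact (α.naturality (eqToHom (funIter_swap U m n X))).symm
      rw [hnat, ← Category.assoc, ih]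

lemma pow_comm (U : C ⥤ C) (α : 𝟭 C ⟶ U)
    (hwp : ∀ X : C, U.map (α.app X) = α.app (U.obj X)) (n : ℕ) (X : C) :
    (funIter U n).map ((αPow U α n).app X) = (αPow U α n).app ((funIter U n).obj X) := by
  have h := pow_comm' U α hwp n n X
  rwa [show (eqToHom (funIter_swap U n n X) :
      (funIter U n).obj ((funIter U n).obj X) ⟶ (funIter U n).obj ((funIter U n).obj X)) = 𝟙 _ from rfl,
    Category.comp_id] at h

lemma chain_map_from_zero (U : C ⥤ C) (α : 𝟭 C ⟶ U) (A : C) (n : ℕ) :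
    (chain U α A).map (homOfLE (Nat.zero_le n)) = (αPow U α n).app A := by
  induction n with
  | zero =>
      rw [show homOfLE (Nat.zero_le 0) = 𝟙 (0 : ℕ) from rfl, CategoryTheory.Functor.map_id]
      rfl
  | succ n ih =>
      rw [show homOfLE (Nat.zero_le (n+1)) =
            homOfLE (Nat.zero_le n) ≫ homOfLE (Nat.le_add_right n 1) from rfl,
        Functor.map_comp, ih]
      simp only [chain]
      erw [Functor.ofSequence_map_homOfLE_succ]
      rfl

/-- If every transition map of an ℕ-chain is an isomorphism, the leg at 0 is an isomorphism. -/
lemma colimit_ι_zero_isIso (F : ℕ ⥤ C)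
    (h : ∀ n : ℕ, IsIso (F.map (homOfLE (Nat.le_add_right n 1)))) :
    IsIso (colimit.ι F 0) := by
  have hz : ∀ n : ℕ, IsIso (F.map (homOfLE (Nat.zero_le n))) := by
    intro n
    induction n with
    | zero =>
        rw [show homOfLE (Nat.zero_le 0) = 𝟙 (0 : ℕ) from rfl, CategoryTheory.Functor.map_id]
        infer_instance
    | succ n ih =>
        rw [show homOfLE (Nat.zero_le (n+1)) =
              homOfLE (Nat.zero_le n) ≫ homOfLE (Nat.le_add_right n 1) from rfl,
          Functor.map_comp]
        exact IsIso.comp_isIso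
  have key : ∀ {i j : ℕ} (f : i ⟶ j),
      F.map (homOfLE (Nat.zero_le i)) ≫ F.map f = F.map (homOfLE (Nat.zero_le j)) := by
    intro i j f
    rw [← Functor.map_comp]
    congr 1
  let s : Cocone F :=
    { pt := F.obj 0
      ι := { app := fun n => inv (F.map (homOfLE (Nat.zero_le n)))
             naturality := by
               intro i j f
               simp only [Functor.const_obj_obj, Functor.const_obj_map, Category.comp_id]
               rw [IsIso.comp_inv_eq, IsIso.eq_inv_comp]
               exact key f } }
  refine ⟨colimit.desc F s, ?_, ?_⟩
  · rw [colimit.ι_desc]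
    show inv (F.map (homOfLE (Nat.zero_le 0))) = 𝟙 _
    rw [show homOfLE (Nat.zero_le 0) = 𝟙 (0 : ℕ) from rfl]
    simp
  · ext n
    rw [colimit.ι_desc_assoc, Category.comp_id]
    show inv (F.map (homOfLE (Nat.zero_le n))) ≫ colimit.ι F 0 = colimit.ι F n
    rw [IsIso.inv_comp_eq, colimit.w]

lemma alphaT_isIso (U : C ⥤ C) (α : 𝟭 C ⟶ U) [PreservesColimitsOfShape ℕ U]
    (hwp : ∀ X : C, U.map (α.app X) = α.app (U.obj X)) (A : C) :
    IsIso (α.app (colimit (chain U α A))) := by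
  set F := chain U α A with hF
  have hmapsucc : ∀ n : ℕ, F.map (homOfLE (Nat.le_add_right n 1)) = α.app ((funIter U n).obj A) :=
    fun n => Functor.ofSequence_map_homOfLE_succ _ n
  let t : Cocone (F ⋙ U) :=
    { pt := colimit F
      ι := NatTrans.ofSequence (F := F ⋙ U) (G := (Functor.const ℕ).obj (colimit F))
          (fun n => colimit.ι F (n + 1))
          (fun n => by
            show U.map (F.map _) ≫ _ = _ ≫ 𝟙 _
            erw [Category.comp_id, hmapsucc, hwp,
              show α.app (U.obj ((funIter U n).obj A)) =
                F.map (homOfLE (Nat.le_add_right (n+1) 1)) from (hmapsucc (n+1)).symm]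
            exact colimit.w F _) }
  have hc : IsColimit (U.mapCocone (colimit.cocone F)) :=
    isColimitOfPreserves U (colimit.isColimit F)
  let β : U.obj (colimit F) ⟶ colimit F := hc.desc t
  have β_fac : ∀ n : ℕ, U.map (colimit.ι F n) ≫ β = colimit.ι F (n + 1) := fun n => hc.fac t n
  refine ⟨β, ?_, ?_⟩
  · apply colimit.hom_ext
    intro n
    have hnat := α.naturality (colimit.ι F n)
    simp only [Functor.id_map, Functor.id_obj] at hnat
    rw [← Category.assoc, hnat, Category.assoc, β_fac,
      show α.app (F.obj n) = F.map (homOfLE (Nat.le_add_right n 1)) from (hmapsucc n).symm]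
    erw [Category.comp_id]
    exact colimit.w F _
  · apply hc.hom_ext
    intro n
    have hnat := α.naturality (colimit.ι F (n + 1))
    simp only [Functor.id_map, Functor.id_obj] at hnat
    show U.map (colimit.ι F n) ≫ β ≫ α.app (colimit F) = U.map (colimit.ι F n) ≫ 𝟙 _
    simp only [Category.comp_id]
    erw [← Category.assoc, β_fac, hnat,
      show (colimit.ι F n : F.obj n ⟶ colimit F) =
        F.map (homOfLE (Nat.le_add_right n 1)) ≫ colimit.ι F (n + 1) from (colimit.w F _).symm,
      U.map_comp, hmapsucc, hwp]
    rfl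


lemma tUnit_Tobj_isIso (U : C ⥤ C) (α : 𝟭 C ⟶ U) [PreservesColimitsOfShape ℕ U]
    (hwp : ∀ X : C, U.map (α.app X) = α.app (U.obj X)) (X : C) :
    IsIso (tUnit U α (Tobj U α X)) := by
  show IsIso (colimit.ι (chain U α (Tobj U α X)) 0)
  apply colimit_ι_zero_isIso
  intro n
  rw [show (chain U α (Tobj U α X)).map (homOfLE (Nat.le_add_right n 1)) =
        α.app ((funIter U n).obj (Tobj U α X)) from Functor.ofSequence_map_homOfLE_succ _ n,
    ← hwp_pow U α hwp n (Tobj U α X)]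
  have : IsIso (α.app (Tobj U α X)) := alphaT_isIso U α hwp X
  exact @IsIso.comp_isIso _ _ _ _ _ _ _ (Functor.map_isIso (funIter U n) (α.app (Tobj U α X))) (eqToIso (funIter_obj_comm U n (Tobj U α X))).isIso_hom

lemma Tmap_tUnit_eq (U : C ⥤ C) (α : 𝟭 C ⟶ U) [PreservesColimitsOfShape ℕ U]
    (hwp : ∀ X : C, U.map (α.app X) = α.app (U.obj X)) (X : C) :
    Tmap U α (tUnit U α X) = tUnit U α (Tobj U α X) := by
  apply colimit.hom_ext
  intro n
  erw [Tmap, ι_colimMap,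
    show (chainMap U α (tUnit U α X)).app n = (funIter U n).map (tUnit U α X) from rfl]
  conv_rhs => rw [tUnit,
    show (colimit.ι (chain U α (Tobj U α X)) 0 : _) =
      (chain U α (Tobj U α X)).map (homOfLE (Nat.zero_le n)) ≫
        colimit.ι (chain U α (Tobj U α X)) n from (colimit.w _ _).symm,
    chain_map_from_zero]
  erw [← Category.assoc]
  congr 1
  have hnat := (αPow U α n).naturality (colimit.ι (chain U α X) n)
  simp only [Functor.id_map] at hnat
  show (funIter U n).map (tUnit U α X) =
    colimit.ι (chain U α X) n ≫ (αPow U α n).app (colimit (chain U α X))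
  erw [hnat, tUnit,
    show (colimit.ι (chain U α X) 0 : _) =
      (chain U α X).map (homOfLE (Nat.zero_le n)) ≫ colimit.ι (chain U α X) n
      from (colimit.w _ _).symm,
    chain_map_from_zero, Functor.map_comp, pow_comm U α hwp]
  rfl

/-- For a well-pointed endofunctor `U` with unit `α` and localization `(T, ι)` given by
the colimit of the chain of iterates, both `ι.app (T X) : T X ⟶ T (T X)` and
`T.map (ι.app X) : T X ⟶ T (T X)` are isomorphisms. -/
theorem stmt4 (U : C ⥤ C) (α : 𝟭 C ⟶ U)
    [PreservesColimitsOfShape ℕ U]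
    (hwp : ∀ X : C, U.map (α.app X) = α.app (U.obj X)) (X : C) :
    IsIso (tUnit U α (Tobj U α X)) ∧ IsIso (Tmap U α (tUnit U α X)) := by
  refine ⟨tUnit_Tobj_isIso U α hwp X, ?_⟩
  rw [Tmap_tUnit_eq U α hwp X]
  exact tUnit_Tobj_isIso U α hwp X
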